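/- The function A(x,t) = e^{i·t²/10} · e^{(1+i)x} · (cosh t)^{-2} / (1 + (1/8)·e^{2x}·(cosh t)^{-4}) satisfies i·A_t + tanh(t)·A_xx + (t/5)·A + tanh(t)·|A|²·A = 0 for all (x,t) ∈ ℝ². -/

import Mathlib

open Complex

set_option maxHeartbeats 2000000 in
theorem vcNLS_soliton_tanh_coefficients :
    let A : ℝ → ℝ → ℂ := fun x t =>
      Complex.exp (Complex.I * (t : ℂ) ^ 2 / 10) *
        Complex.exp ((1 + Complex.I) * (x : ℂ)) * ((Real.cosh t : ℂ) ^ 2)⁻¹ /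
        (1 + (1 / 8) * Complex.exp (2 * (x : ℂ)) * ((Real.cosh t : ℂ) ^ 4)⁻¹)
    ∀ x t : ℝ,
      Complex.I * deriv (fun τ => A x τ) t
        + ((Real.tanh t : ℝ) : ℂ) * deriv (deriv (fun y => A y t)) x
        + ((t / 5 : ℝ) : ℂ) * A x t
        + ((Real.tanh t : ℝ) : ℂ) * (‖A x t‖ : ℂ) ^ 2 * A x t = 0 := by
  intro A x t
  have hcR : (0:ℝ) < Real.cosh t := Real.cosh_pos t
  have hc : (Real.cosh t : ℂ) ≠ 0 := by exact_mod_cast hcR.ne'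
  have hDreal : ∀ y τ : ℝ,
      (1 + 1/8 * Complex.exp (2*(y:ℂ)) * ((Real.cosh τ:ℂ)^4)⁻¹)
        = ((1 + 1/8 * Real.exp (2*y) * ((Real.cosh τ)^4)⁻¹ : ℝ) : ℂ) := by
    intro y τ; push_cast; ring
  have hDpos : ∀ y τ : ℝ, (0:ℝ) < 1 + 1/8 * Real.exp (2*y) * ((Real.cosh τ)^4)⁻¹ := by
    intro y τ; positivity
  have hDne : ∀ y τ : ℝ,
      (1 + 1/8 * Complex.exp (2*(y:ℂ)) * ((Real.cosh τ:ℂ)^4)⁻¹) ≠ 0 := by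
    intro y τ; rw [hDreal]; exact_mod_cast (hDpos y τ).ne'
  -- t-derivative
  have hsq : HasDerivAt (fun τ:ℝ => (τ:ℂ)^2) (2*(t:ℂ)) t := by
    have h := (((hasDerivAt_id t).pow 2).ofReal_comp :
      HasDerivAt (fun τ:ℝ => ((id τ ^2 : ℝ):ℂ)) _ t)
    simp only [id_eq, Complex.ofReal_pow] at h
    simpa using h
  have hE : HasDerivAt (fun τ:ℝ => Complex.exp (Complex.I*(τ:ℂ)^2/10))
      (Complex.exp (Complex.I*(t:ℂ)^2/10) * (Complex.I*(2*(t:ℂ))/10)) t :=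
    ((hsq.const_mul Complex.I).div_const 10).cexp
  have hc2i : HasDerivAt (fun τ:ℝ => (((Real.cosh τ:ℝ):ℂ)^2)⁻¹)
      ((-(2*(Real.sinh t)*(Real.cosh t)) / ((Real.cosh t)^2)^2 : ℝ) : ℂ) t := by
    have hr : HasDerivAt (fun τ:ℝ => ((Real.cosh τ)^2)⁻¹)
        (-(2*(Real.sinh t)*(Real.cosh t)) / ((Real.cosh t)^2)^2) t := by
      have h := ((Real.hasDerivAt_cosh t).pow 2).inv (pow_ne_zero 2 hcR.ne')
      exact h.congr_deriv (by simp; ring)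
    have h2 := hr.ofReal_comp
    simp only [Complex.ofReal_inv, Complex.ofReal_pow] at h2
    exact h2
  have hc4i : HasDerivAt (fun τ:ℝ => (((Real.cosh τ:ℝ):ℂ)^4)⁻¹)
      ((-(4*(Real.cosh t)^3*(Real.sinh t)) / ((Real.cosh t)^4)^2 : ℝ) : ℂ) t := by
    have hr : HasDerivAt (fun τ:ℝ => ((Real.cosh τ)^4)⁻¹)
        (-(4*(Real.cosh t)^3*(Real.sinh t)) / ((Real.cosh t)^4)^2) t := by
      have h := ((Real.hasDerivAt_cosh t).pow 4).inv (pow_ne_zero 4 hcR.ne')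
      exact h.congr_deriv (by simp)
    have h2 := hr.ofReal_comp
    simp only [Complex.ofReal_inv, Complex.ofReal_pow] at h2
    exact h2
  have hDt := (hc4i.const_mul (1/8 * Complex.exp (2*(x:ℂ)))).const_add 1
  have hAt := ((hE.mul_const (Complex.exp ((1+Complex.I)*(x:ℂ)))).mul hc2i).div hDt (hDne x t)
  have h1 : deriv (fun τ => A x τ) t = _ := hAt.deriv
  -- first x-derivative, as a function
  let φ : ℝ → ℂ := fun y =>
    (Complex.exp (Complex.I*(t:ℂ)^2/10) * (Complex.exp ((1+Complex.I)*(y:ℂ)) * (1+Complex.I))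
        * ((Real.cosh t:ℂ)^2)⁻¹
        * (1 + 1/8 * Complex.exp (2*(y:ℂ)) * ((Real.cosh t:ℂ)^4)⁻¹)
      - Complex.exp (Complex.I*(t:ℂ)^2/10) * Complex.exp ((1+Complex.I)*(y:ℂ))
        * ((Real.cosh t:ℂ)^2)⁻¹
        * (1/8 * (Complex.exp (2*(y:ℂ)) * 2) * ((Real.cosh t:ℂ)^4)⁻¹))
    / (1 + 1/8 * Complex.exp (2*(y:ℂ)) * ((Real.cosh t:ℂ)^4)⁻¹)^2
  have hid' : ∀ y:ℝ, HasDerivAt (fun y':ℝ => (y':ℂ)) 1 y := by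
    intro y; simpa using (hasDerivAt_id y).ofReal_comp
  have hF : ∀ y:ℝ, HasDerivAt (fun y':ℝ => Complex.exp ((1+Complex.I)*(y':ℂ)))
      (Complex.exp ((1+Complex.I)*(y:ℂ)) * (1+Complex.I)) y := by
    intro y
    simpa using (((hid' y).const_mul (1+Complex.I)).cexp)
  have hG : ∀ y:ℝ, HasDerivAt (fun y':ℝ => Complex.exp (2*(y':ℂ)))
      (Complex.exp (2*(y:ℂ)) * 2) y := by
    intro y
    simpa using (((hid' y).const_mul (2:ℂ)).cexp)
  have hD' : ∀ y:ℝ, HasDerivAt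
      (fun y':ℝ => 1 + 1/8 * Complex.exp (2*(y':ℂ)) * ((Real.cosh t:ℂ)^4)⁻¹)
      (1/8 * (Complex.exp (2*(y:ℂ)) * 2) * ((Real.cosh t:ℂ)^4)⁻¹) y := by
    intro y
    exact (((hG y).const_mul (1/8)).mul_const _).const_add 1
  have hg : ∀ y:ℝ, HasDerivAt (fun y' => A y' t) (φ y) y := by
    intro y
    exact (((hF y).const_mul (Complex.exp (Complex.I*(t:ℂ)^2/10))).mul_const
      (((Real.cosh t:ℂ)^2)⁻¹)).div (hD' y) (hDne y t)
  have hd1 : deriv (fun y => A y t) = φ := funext fun y => (hg y).deriv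
  -- second x-derivative
  have hT1 := ((((hF x).mul_const (1+Complex.I)).const_mul
      (Complex.exp (Complex.I*(t:ℂ)^2/10))).mul_const (((Real.cosh t:ℂ)^2)⁻¹)).mul (hD' x)
  have hT2 := (((hF x).const_mul (Complex.exp (Complex.I*(t:ℂ)^2/10))).mul_const
      (((Real.cosh t:ℂ)^2)⁻¹)).mul
      ((((hG x).mul_const (2:ℂ)).const_mul (1/8)).mul_const (((Real.cosh t:ℂ)^4)⁻¹))
  have hQ : HasDerivAt
      (fun y:ℝ => (1 + 1/8 * Complex.exp (2*(y:ℂ)) * ((Real.cosh t:ℂ)^4)⁻¹)^2)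
      ((1/8 * (Complex.exp (2*(x:ℂ)) * 2) * ((Real.cosh t:ℂ)^4)⁻¹)
        * (1 + 1/8 * Complex.exp (2*(x:ℂ)) * ((Real.cosh t:ℂ)^4)⁻¹)
        + (1 + 1/8 * Complex.exp (2*(x:ℂ)) * ((Real.cosh t:ℂ)^4)⁻¹)
        * (1/8 * (Complex.exp (2*(x:ℂ)) * 2) * ((Real.cosh t:ℂ)^4)⁻¹)) x := by
    have h := (hD' x).mul (hD' x)
    have e : (fun y:ℝ => (1 + 1/8 * Complex.exp (2*(y:ℂ)) * ((Real.cosh t:ℂ)^4)⁻¹)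
        * (1 + 1/8 * Complex.exp (2*(y:ℂ)) * ((Real.cosh t:ℂ)^4)⁻¹))
        = fun y:ℝ => (1 + 1/8 * Complex.exp (2*(y:ℂ)) * ((Real.cosh t:ℂ)^4)⁻¹)^2 := by
      funext y; ring
    rw [← e]
    exact h
  have hφ := (hT1.sub hT2).div hQ (pow_ne_zero 2 (hDne x t))
  have h2 : deriv φ x = _ := hφ.deriv
  -- the norm
  have hex : Complex.exp ((x:ℂ))^2 = Complex.exp (2*(x:ℂ)) := by
    rw [← Complex.exp_nat_mul]; norm_num
  have hnorm : ‖A x t‖ = Real.exp x * ((Real.cosh t)^2)⁻¹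
      / (1 + 1/8*Real.exp (2*x) * ((Real.cosh t)^4)⁻¹) := by
    have e1 : Complex.I*(t:ℂ)^2/10 = (((t^2/10 : ℝ)):ℂ) * Complex.I := by push_cast; ring
    have e2 : (1+Complex.I)*(x:ℂ) = ((x:ℝ):ℂ) + ((x:ℝ):ℂ)*Complex.I := by ring
    show ‖Complex.exp (Complex.I * (t : ℂ) ^ 2 / 10) *
        Complex.exp ((1 + Complex.I) * (x : ℂ)) * ((Real.cosh t : ℂ) ^ 2)⁻¹ /
        (1 + (1 / 8) * Complex.exp (2 * (x : ℂ)) * ((Real.cosh t : ℂ) ^ 4)⁻¹)‖ = _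
    rw [hDreal x t, e1, e2, Complex.exp_add]
    simp only [norm_div, norm_mul, norm_inv, norm_pow,
      Complex.norm_exp_ofReal_mul_I, Complex.norm_exp_ofReal, Complex.norm_real, Real.norm_eq_abs]
    rw [abs_of_pos hcR, abs_of_pos (hDpos x t)]
    ring
  have hnormC : ((‖A x t‖:ℝ):ℂ)^2
      = Complex.exp (2*(x:ℂ)) * ((Real.cosh t:ℂ)^4)⁻¹
        / (1 + 1/8 * Complex.exp (2*(x:ℂ)) * ((Real.cosh t:ℂ)^4)⁻¹)^2 := by
    rw [hnorm]
    push_cast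
    rw [div_pow, mul_pow, hex]
    ring
  -- clean forms
  have hcc : Complex.cosh (t:ℂ) ≠ 0 := by rw [← Complex.ofReal_cosh]; exact hc
  have hD2 : (1 + 1/8 * Complex.exp (2*(x:ℂ)) * (Complex.cosh (t:ℂ)^4)⁻¹) ≠ 0 := by
    rw [← Complex.ofReal_cosh]; exact hDne x t
  have hQ : (8 * Complex.cosh (t:ℂ)^4 + Complex.exp (2*(x:ℂ))) ≠ 0 := by
    have e : 8 * Complex.cosh (t:ℂ)^4 + Complex.exp (2*(x:ℂ))
        = (8 * Complex.cosh (t:ℂ)^4) * (1 + 1/8 * Complex.exp (2*(x:ℂ)) * (Complex.cosh (t:ℂ)^4)⁻¹) := by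
      field_simp
    rw [e]
    exact mul_ne_zero (by simpa using pow_ne_zero 4 hcc) hD2
  have hQ2 : (Complex.cosh (t:ℂ)^4 * 8 + Complex.exp (2*(x:ℂ))) ≠ 0 := by
    intro h; exact hQ (by linear_combination h)
  have hQ3 : (Complex.exp (2*(x:ℂ)) + 8 * Complex.cosh (t:ℂ)^4) ≠ 0 := by
    intro h; exact hQ (by linear_combination h)
  have hQ4 : (Complex.exp (2*(x:ℂ)) + Complex.cosh (t:ℂ)^4 * 8) ≠ 0 := by
    intro h; exact hQ (by linear_combination h)
  have hI2 : Complex.I^2 = -1 := Complex.I_sq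
  have hI3 : Complex.I^3 = -Complex.I := by rw [pow_succ, hI2]; ring
  have hI4 : Complex.I^4 = 1 := by rw [pow_succ, hI3]; simp [Complex.I_mul_I]
  have h1c : deriv (fun τ => A x τ) t =
      (8/5*Complex.I*(t:ℂ) * Complex.exp (Complex.I*(t:ℂ)^2/10) * Complex.exp ((1+Complex.I)*(x:ℂ))
          * Complex.cosh (t:ℂ)^2 * (8 * Complex.cosh (t:ℂ)^4 + Complex.exp (2*(x:ℂ)))
        - 16 * Complex.exp (Complex.I*(t:ℂ)^2/10) * Complex.exp ((1+Complex.I)*(x:ℂ))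
          * Complex.sinh (t:ℂ) * Complex.cosh (t:ℂ) * (8 * Complex.cosh (t:ℂ)^4 + Complex.exp (2*(x:ℂ)))
        + 32 * Complex.exp (Complex.I*(t:ℂ)^2/10) * Complex.exp ((1+Complex.I)*(x:ℂ))
          * Complex.sinh (t:ℂ) * Complex.cosh (t:ℂ) * Complex.exp (2*(x:ℂ)))
      / (8 * Complex.cosh (t:ℂ)^4 + Complex.exp (2*(x:ℂ)))^2 := by
    rw [h1]
    simp only [Pi.mul_apply]
    push_cast
    rw [div_eq_div_iff (pow_ne_zero 2 hD2) (pow_ne_zero 2 hQ)]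
    field_simp [hcc, hD2]
    first
      | ring1
      | (rw [div_eq_iff (by simp [hcc])]; ring1)
      | (rw [eq_div_iff (by simp [hcc])]; ring1)
      | (rw [div_eq_iff (by simp [hcc])]; ring_nf; simp only [hI2, hI3, hI4]; try ring1)
      | (rw [eq_div_iff (by simp [hcc])]; ring_nf; simp only [hI2, hI3, hI4]; try ring1)
      | (ring_nf; simp only [hI2, hI3, hI4]; try ring1)
  have h2c : deriv φ x =
      (16*Complex.I * Complex.exp (Complex.I*(t:ℂ)^2/10) * Complex.exp ((1+Complex.I)*(x:ℂ))
          * Complex.cosh (t:ℂ)^2 * (8 * Complex.cosh (t:ℂ)^4 + Complex.exp (2*(x:ℂ)))^2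
        - (64+32*Complex.I) * Complex.exp (Complex.I*(t:ℂ)^2/10) * Complex.exp ((1+Complex.I)*(x:ℂ))
          * Complex.exp (2*(x:ℂ)) * Complex.cosh (t:ℂ)^2 * (8 * Complex.cosh (t:ℂ)^4 + Complex.exp (2*(x:ℂ)))
        + 64 * Complex.exp (Complex.I*(t:ℂ)^2/10) * Complex.exp ((1+Complex.I)*(x:ℂ))
          * Complex.exp (2*(x:ℂ))^2 * Complex.cosh (t:ℂ)^2)
      / (8 * Complex.cosh (t:ℂ)^4 + Complex.exp (2*(x:ℂ)))^3 := by
    rw [h2]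
    simp only [Pi.mul_apply, Pi.sub_apply]
    push_cast
    rw [div_eq_div_iff (pow_ne_zero 2 (pow_ne_zero 2 hD2)) (pow_ne_zero 3 hQ)]
    field_simp [hcc, hD2]
    first
      | ring1
      | (rw [div_eq_iff (by simp [hcc])]; ring1)
      | (rw [eq_div_iff (by simp [hcc])]; ring1)
      | (rw [div_eq_iff (by simp [hcc])]; ring_nf; simp only [hI2, hI3, hI4]; try ring1)
      | (rw [eq_div_iff (by simp [hcc])]; ring_nf; simp only [hI2, hI3, hI4]; try ring1)
      | (ring_nf; simp only [hI2, hI3, hI4]; try ring1)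
  have hAc : A x t = 8 * Complex.exp (Complex.I*(t:ℂ)^2/10) * Complex.exp ((1+Complex.I)*(x:ℂ))
      * Complex.cosh (t:ℂ)^2 / (8 * Complex.cosh (t:ℂ)^4 + Complex.exp (2*(x:ℂ))) := by
    show Complex.exp (Complex.I * (t : ℂ) ^ 2 / 10) *
        Complex.exp ((1 + Complex.I) * (x : ℂ)) * ((Real.cosh t : ℂ) ^ 2)⁻¹ /
        (1 + (1 / 8) * Complex.exp (2 * (x : ℂ)) * ((Real.cosh t : ℂ) ^ 4)⁻¹) = _
    push_cast
    rw [div_eq_div_iff hD2 hQ]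
    field_simp [hcc, hD2]
  have hNc : ((‖A x t‖:ℝ):ℂ)^2 = 64 * Complex.exp (2*(x:ℂ)) * Complex.cosh (t:ℂ)^4
      / (8 * Complex.cosh (t:ℂ)^4 + Complex.exp (2*(x:ℂ)))^2 := by
    rw [hnormC]
    push_cast
    rw [div_eq_div_iff (pow_ne_zero 2 hD2) (pow_ne_zero 2 hQ)]
    field_simp [hcc, hD2]
    first
      | ring1
      | (rw [div_eq_iff (by simp [hcc])]; ring1)
      | (rw [eq_div_iff (by simp [hcc])]; ring1)
      | (rw [div_eq_iff (by simp [hcc])]; ring_nf; simp only [hI2, hI3, hI4]; try ring1)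
      | (rw [eq_div_iff (by simp [hcc])]; ring_nf; simp only [hI2, hI3, hI4]; try ring1)
      | (ring_nf; simp only [hI2, hI3, hI4]; try ring1)
  -- assemble
  rw [hd1, h1c, h2c, hNc, hAc, Real.tanh_eq_sinh_div_cosh]
  push_cast
  field_simp [hcc, hQ, hQ2, hQ3, hQ4]
  first
    | ring1
    | (rw [div_eq_iff (by simp [hcc])]; ring1)
    | (rw [eq_div_iff (by simp [hcc])]; ring1)
    | (rw [div_eq_iff (by simp [hcc]; rw [mul_comm (x:ℂ)]; exact hQ)]; ring_nf; simp only [hI2, hI3, hI4]; try ring1)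
    | (rw [eq_div_iff (by simp [hcc])]; ring_nf; simp only [hI2, hI3, hI4]; try ring1)
    | (ring_nf; simp only [hI2, hI3, hI4]; try ring1)
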